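/- Work in the ring of formal power series in X over the polynomial ring ℚ[t]. Let Ê = Σ_{n=0}^∞ Eₙ·Xⁿ/n!, and for n ≥ 1 let Âₙ(t) = Σ_{π ∈ Sₙ} t^{altdes(π)+1}, where the sum is over all permutations of [n]. Then (1 − t·((rescale by (1−t)) applied to Ê)) · (1 + Σ_{n=1}^∞ Âₙ(t)·Xⁿ/n!) = 1 − t, where rescaling by (1−t) multiplies the coefficient of Xⁿ by (1−t)ⁿ. -/

import Mathlib

/-- The entry of the permutation `σ` of `[n]` at (1-based) position `i`,
as a value in `{1, …, n}`; `0` if `i` is out of range. -/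
def permEnt {n : ℕ} (σ : Equiv.Perm (Fin n)) (i : ℕ) : ℕ :=
  if h : 1 ≤ i ∧ i ≤ n then (σ ⟨i - 1, by omega⟩ : ℕ) + 1 else 0

/-- `i` is a descent of `σ`: `1 ≤ i ≤ n−1` and `π_i > π_{i+1}`. -/
def IsDescent {n : ℕ} (σ : Equiv.Perm (Fin n)) (i : ℕ) : Prop :=
  1 ≤ i ∧ i < n ∧ permEnt σ (i + 1) < permEnt σ i

/-- `i` is an alternating descent of `σ`: `i` odd with `π_i > π_{i+1}`,
or `i` even with `π_i < π_{i+1}`. -/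
def IsAltDescent {n : ℕ} (σ : Equiv.Perm (Fin n)) (i : ℕ) : Prop :=
  1 ≤ i ∧ i < n ∧
    ((i % 2 = 1 ∧ permEnt σ (i + 1) < permEnt σ i) ∨
     (i % 2 = 0 ∧ permEnt σ i < permEnt σ (i + 1)))

instance {n : ℕ} (σ : Equiv.Perm (Fin n)) (i : ℕ) : Decidable (IsDescent σ i) := by
  unfold IsDescent; infer_instance

instance {n : ℕ} (σ : Equiv.Perm (Fin n)) (i : ℕ) : Decidable (IsAltDescent σ i) := by
  unfold IsAltDescent; infer_instance

/-- `i` is a peak of `σ`: `2 ≤ i ≤ n−1` and `π_{i−1} < π_i > π_{i+1}`. -/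
def IsPeak {n : ℕ} (σ : Equiv.Perm (Fin n)) (i : ℕ) : Prop :=
  2 ≤ i ∧ i < n ∧ permEnt σ (i - 1) < permEnt σ i ∧ permEnt σ (i + 1) < permEnt σ i

/-- `i` is a valley of `σ`: `2 ≤ i ≤ n−1` and `π_{i−1} > π_i < π_{i+1}`. -/
def IsValley {n : ℕ} (σ : Equiv.Perm (Fin n)) (i : ℕ) : Prop :=
  2 ≤ i ∧ i < n ∧ permEnt σ i < permEnt σ (i - 1) ∧ permEnt σ i < permEnt σ (i + 1)

/-- All valleys of `σ` are even and all peaks of `σ` are odd. -/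
def GoodPerm {n : ℕ} (σ : Equiv.Perm (Fin n)) : Prop :=
  (∀ i, IsValley σ i → i % 2 = 0) ∧ (∀ i, IsPeak σ i → i % 2 = 1)

/-- `f n` is the number of permutations of `[n]` with all valleys even and all peaks odd. -/
noncomputable def fCount (n : ℕ) : ℕ :=
  Nat.card {σ : Equiv.Perm (Fin n) // GoodPerm σ}

/-- `g n` is the number of permutations of `[n]` with all valleys even and all peaks odd
having no descent at position `n − 1`. -/
noncomputable def gCount (n : ℕ) : ℕ :=
  Nat.card {σ : Equiv.Perm (Fin n) // GoodPerm σ ∧ ¬ IsDescent σ (n - 1)}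

/-- `σ` is an alternating permutation: `π₁ > π₂ < π₃ > π₄ < ⋯`. -/
def IsAltPerm {n : ℕ} (σ : Equiv.Perm (Fin n)) : Prop :=
  ∀ i, 1 ≤ i → i < n →
    (i % 2 = 1 → permEnt σ (i + 1) < permEnt σ i) ∧
    (i % 2 = 0 → permEnt σ i < permEnt σ (i + 1))

/-- The Euler number `Eₙ`, the number of alternating permutations of `[n]`. -/
noncomputable def eulerNum (n : ℕ) : ℕ :=
  Nat.card {σ : Equiv.Perm (Fin n) // IsAltPerm σ}

/-- The number of alternating descents of `σ`. -/
def altdes {n : ℕ} (σ : Equiv.Perm (Fin n)) : ℕ :=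
  ((Finset.range n).filter (fun i => IsAltDescent σ i)).card

namespace St16
open Finset

def wA (j : ℕ) : Prop := j % 2 = 0

def bP (c : ℕ) (w : ℕ → Prop) (G : Finset ℕ) (σ : Equiv.Perm (Fin c)) : Prop :=
  ∀ j, (h : j + 1 < c) → j ∉ G → ((σ ⟨j, by omega⟩ < σ ⟨j + 1, h⟩) ↔ w j)

noncomputable def bcount (c : ℕ) (w : ℕ → Prop) (G : Finset ℕ) : ℕ :=
  Nat.card {σ : Equiv.Perm (Fin c) // bP c w G σ}

lemma perm_ne {c : ℕ} (σ : Equiv.Perm (Fin c)) {x y : Fin c} (h : x ≠ y) : σ x ≠ σ y :=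
  fun e => h (σ.injective e)

lemma perm_ne' {c : ℕ} (σ : Equiv.Perm (Fin c)) {j : ℕ} (h : j + 1 < c) :
    ((σ ⟨j, by omega⟩ : Fin c) : ℕ) ≠ ((σ ⟨j + 1, h⟩ : Fin c) : ℕ) := by
  intro hv
  exact perm_ne σ (x := ⟨j, by omega⟩) (y := ⟨j + 1, h⟩) (by simp [Fin.ext_iff]) (Fin.ext hv)

lemma bcount_congr {c : ℕ} {w w' : ℕ → Prop} {G G' : Finset ℕ}
    (hG : ∀ j, j + 1 < c → (j ∈ G ↔ j ∈ G')) (hw : ∀ j, j + 1 < c → j ∉ G → (w j ↔ w' j)) :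
    bcount c w G = bcount c w' G' := by
  apply Nat.card_congr
  apply Equiv.subtypeEquivRight
  intro σ
  constructor
  · intro h j hj hg
    have hg' : j ∉ G := fun hx => hg ((hG j hj).mp hx)
    exact (h j hj hg').trans (hw j hj hg')
  · intro h j hj hg
    exact (h j hj (fun hx => hg ((hG j hj).mpr hx))).trans (hw j hj hg).symm

def revEquiv (c : ℕ) : Equiv.Perm (Fin c) ≃ Equiv.Perm (Fin c) where
  toFun σ := σ.trans Fin.revPerm
  invFun σ := σ.trans Fin.revPerm
  left_inv σ := by ext x; simp [Fin.rev_rev]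
  right_inv σ := by ext x; simp [Fin.rev_rev]

lemma bcount_flip (c : ℕ) (w : ℕ → Prop) (G : Finset ℕ) :
    bcount c w G = bcount c (fun j => ¬ w j) G := by
  apply Nat.card_congr
  refine Equiv.subtypeEquiv (revEquiv c) (fun σ => ?_)
  constructor
  · intro h j hj hg
    have h1 := h j hj hg
    have hne := perm_ne' σ hj
    show (σ ⟨j, by omega⟩ : Fin c).rev < (σ ⟨j + 1, hj⟩ : Fin c).rev ↔ ¬ w j
    rw [Fin.rev_lt_rev, Fin.lt_def] at *
    constructor
    · intro hlt hw; have := h1.mpr hw; omega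
    · intro hw
      have : ¬ ((σ ⟨j, by omega⟩ : Fin c) : ℕ) < ((σ ⟨j + 1, hj⟩ : Fin c) : ℕ) :=
        fun hl => hw (h1.mp hl)
      omega
  · intro h j hj hg
    have h1 := h j hj hg
    have hne := perm_ne' σ hj
    have h1' : (σ ⟨j, by omega⟩ : Fin c).rev < (σ ⟨j + 1, hj⟩ : Fin c).rev ↔ ¬ w j := h1
    rw [Fin.rev_lt_rev, Fin.lt_def] at h1'
    rw [Fin.lt_def]
    constructor
    · intro hlt
      by_contra hw
      have := h1'.mpr hw; omega
    · intro hw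
      have : ¬ ((σ ⟨j + 1, hj⟩ : Fin c) : ℕ) < ((σ ⟨j, by omega⟩ : Fin c) : ℕ) :=
        fun hl => (h1'.mp hl) hw
      omega

lemma permEnt_succ {c : ℕ} (σ : Equiv.Perm (Fin c)) (j : ℕ) (h : j < c) :
    permEnt σ (j + 1) = (σ ⟨j, h⟩ : ℕ) + 1 := by
  unfold permEnt
  rw [dif_pos (by omega : 1 ≤ j + 1 ∧ j + 1 ≤ c)]
  simp only [Nat.add_sub_cancel]

lemma entUp {c : ℕ} (σ : Equiv.Perm (Fin c)) (j : ℕ) (h : j + 1 < c) :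
    permEnt σ (j + 1) < permEnt σ (j + 2) ↔ σ ⟨j, by omega⟩ < σ ⟨j + 1, h⟩ := by
  rw [permEnt_succ σ j (by omega), show j + 2 = (j + 1) + 1 from rfl, permEnt_succ σ (j + 1) h,
    Fin.lt_def]
  omega

lemma entDown {c : ℕ} (σ : Equiv.Perm (Fin c)) (j : ℕ) (h : j + 1 < c) :
    permEnt σ (j + 2) < permEnt σ (j + 1) ↔ ¬ (σ ⟨j, by omega⟩ < σ ⟨j + 1, h⟩) := by
  have hne := perm_ne' σ h
  rw [permEnt_succ σ j (by omega), show j + 2 = (j + 1) + 1 from rfl, permEnt_succ σ (j + 1) h,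
    Fin.lt_def]
  omega

lemma eulerNum_eq_bcount (c : ℕ) : eulerNum c = bcount c (fun j => j % 2 = 1) ∅ := by
  apply Nat.card_congr
  apply Equiv.subtypeEquivRight
  intro σ
  constructor
  · intro h j hj _
    have h2 := h (j + 1) (by omega) (by omega)
    rcases Nat.mod_two_eq_zero_or_one j with he | ho
    · have hd := (entDown σ j hj).mp (by
        have := h2.1 (by omega)
        rwa [show j + 1 + 1 = j + 2 from rfl] at this)
      exact ⟨fun hlt => absurd hlt hd, fun hm => absurd hm (by omega)⟩
    · have hu := (entUp σ j hj).mp (by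
        have := h2.2 (by omega)
        rwa [show j + 1 + 1 = j + 2 from rfl] at this)
      exact ⟨fun _ => by omega, fun _ => hu⟩
  · intro h i h1 h2
    obtain ⟨j, rfl⟩ : ∃ j, i = j + 1 := ⟨i - 1, by omega⟩
    have h3 := h j (by omega) (Finset.notMem_empty j)
    rw [show j + 1 + 1 = j + 2 from rfl]
    constructor
    · intro hmod
      exact (entDown σ j (by omega)).mpr (fun hl => by have := h3.mp hl; omega)
    · intro hmod
      exact (entUp σ j (by omega)).mpr (h3.mpr (by omega))

lemma eulerNum_eq_bcountA (c : ℕ) : eulerNum c = bcount c wA ∅ := by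
  rw [eulerNum_eq_bcount, bcount_flip]
  exact bcount_congr (fun j _ => Iff.rfl) (fun j _ _ => by unfold wA; omega)

section Split

variable (a b : ℕ)

def posL (j : Fin a) : Fin (a + b) := ⟨j.1, by omega⟩

def posR (j : Fin b) : Fin (a + b) := ⟨a + j.1, by omega⟩

variable {a b}

lemma posL_injective : Function.Injective (posL a b) := by
  intro x y h
  simpa [posL, Fin.ext_iff] using h

lemma posR_injective : Function.Injective (posR a b) := by
  intro x y h
  simp only [posR, Fin.ext_iff] at h ⊢
  omega

variable (σ : Equiv.Perm (Fin (a + b)))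

def blockA : Finset (Fin (a + b)) := Finset.univ.image (fun j : Fin a => σ (posL a b j))

lemma card_blockA : (blockA σ).card = a := by
  have hinj : Function.Injective (fun j : Fin a => σ (posL a b j)) :=
    fun x y h => posL_injective (σ.injective h)
  rw [blockA, Finset.card_image_of_injective _ hinj, Finset.card_univ, Fintype.card_fin]

lemma card_blockAc : ((blockA σ)ᶜ).card = b := by
  rw [Finset.card_compl, card_blockA]
  simp only [Fintype.card_fin]
  omega

lemma memA (j : Fin a) : σ (posL a b j) ∈ blockA σ :=
  Finset.mem_image_of_mem _ (Finset.mem_univ j)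

lemma memAc (j : Fin b) : σ (posR a b j) ∈ (blockA σ)ᶜ := by
  rw [Finset.mem_compl]
  intro hmem
  obtain ⟨i, _, hi⟩ := Finset.mem_image.mp hmem
  have h2 := σ.injective hi
  have h3 : (posL a b i).1 = (posR a b j).1 := by rw [h2]
  simp only [posL, posR] at h3
  have := i.isLt
  omega

noncomputable def firstFun (j : Fin a) : Fin a :=
  ((blockA σ).orderIsoOfFin (card_blockA σ)).symm ⟨σ (posL a b j), memA σ j⟩

noncomputable def secondFun (j : Fin b) : Fin b :=
  (((blockA σ)ᶜ).orderIsoOfFin (card_blockAc σ)).symm ⟨σ (posR a b j), memAc σ j⟩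

lemma firstFun_spec (j : Fin a) :
    ((blockA σ).orderEmbOfFin (card_blockA σ)) (firstFun σ j) = σ (posL a b j) := by
  rw [firstFun, ← Finset.coe_orderIsoOfFin_apply, OrderIso.apply_symm_apply]

lemma secondFun_spec (j : Fin b) :
    (((blockA σ)ᶜ).orderEmbOfFin (card_blockAc σ)) (secondFun σ j) = σ (posR a b j) := by
  rw [secondFun, ← Finset.coe_orderIsoOfFin_apply, OrderIso.apply_symm_apply]

lemma firstFun_lt_iff (j j' : Fin a) :
    firstFun σ j < firstFun σ j' ↔ σ (posL a b j) < σ (posL a b j') := by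
  rw [← OrderEmbedding.lt_iff_lt ((blockA σ).orderEmbOfFin (card_blockA σ)),
    firstFun_spec, firstFun_spec]

lemma secondFun_lt_iff (j j' : Fin b) :
    secondFun σ j < secondFun σ j' ↔ σ (posR a b j) < σ (posR a b j') := by
  rw [← OrderEmbedding.lt_iff_lt (((blockA σ)ᶜ).orderEmbOfFin (card_blockAc σ)),
    secondFun_spec, secondFun_spec]

lemma firstFun_injective : Function.Injective (firstFun σ) := by
  intro x y h
  apply posL_injective (a := a) (b := b)
  apply σ.injective
  rw [← firstFun_spec, ← firstFun_spec, h]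

lemma secondFun_injective : Function.Injective (secondFun σ) := by
  intro x y h
  apply posR_injective (a := a) (b := b)
  apply σ.injective
  rw [← secondFun_spec, ← secondFun_spec, h]

noncomputable def firstPerm : Equiv.Perm (Fin a) :=
  Equiv.ofBijective (firstFun σ) (Finite.injective_iff_bijective.mp (firstFun_injective σ))

noncomputable def secondPerm : Equiv.Perm (Fin b) :=
  Equiv.ofBijective (secondFun σ) (Finite.injective_iff_bijective.mp (secondFun_injective σ))

lemma firstPerm_apply (j : Fin a) : firstPerm σ j = firstFun σ j := rfl

lemma secondPerm_apply (j : Fin b) : secondPerm σ j = secondFun σ j := rfl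

variable (a b)

noncomputable def Phi (σ : Equiv.Perm (Fin (a + b))) :
    {A : Finset (Fin (a + b)) // A.card = a} × Equiv.Perm (Fin a) × Equiv.Perm (Fin b) :=
  (⟨blockA σ, card_blockA σ⟩, firstPerm σ, secondPerm σ)

lemma orderEmb_congr {α : Type*} [LinearOrder α] {s t : Finset α} (hst : s = t) {k : ℕ}
    (hs : s.card = k) (ht : t.card = k) (x : Fin k) :
    s.orderEmbOfFin hs x = t.orderEmbOfFin ht x := by subst hst; rfl

lemma Phi_injective : Function.Injective (Phi a b) := by
  intro σ τ h
  obtain ⟨hA, hf, hs⟩ : blockA σ = blockA τ ∧ firstPerm σ = firstPerm τ ∧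
      secondPerm σ = secondPerm τ := by
    simpa [Phi, Prod.ext_iff, Subtype.ext_iff] using h
  have hAc : (blockA σ)ᶜ = (blockA τ)ᶜ := by rw [hA]
  apply Equiv.ext
  intro x
  by_cases hx : x.1 < a
  · have hx1 : x = posL a b ⟨x.1, hx⟩ := by simp [posL]
    rw [hx1, ← firstFun_spec σ, ← firstFun_spec τ]
    rw [show firstFun σ ⟨x.1, hx⟩ = firstFun τ ⟨x.1, hx⟩ from DFunLike.congr_fun hf _]
    exact orderEmb_congr hA _ _ _
  · have hx2 : x = posR a b ⟨x.1 - a, by have := x.isLt; omega⟩ := by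
      simp only [posR, Fin.ext_iff]
      omega
    rw [hx2, ← secondFun_spec σ, ← secondFun_spec τ]
    rw [show secondFun σ _ = secondFun τ _ from DFunLike.congr_fun hs _]
    exact orderEmb_congr hAc _ _ _

lemma Phi_bijective : Function.Bijective (Phi a b) := by
  rw [Fintype.bijective_iff_injective_and_card]
  refine ⟨Phi_injective a b, ?_⟩
  rw [Fintype.card_prod, Fintype.card_prod, Fintype.card_finset_len, Fintype.card_perm,
    Fintype.card_perm, Fintype.card_perm, Fintype.card_fin, Fintype.card_fin, Fintype.card_fin]
  have h := Nat.choose_mul_factorial_mul_factorial (Nat.le_add_right a b)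
  rw [Nat.add_sub_cancel_left] at h
  rw [← h]
  ring

def prodSub {A W : Type*} (Q : W → Prop) : {x : A × W // Q x.2} ≃ A × {w : W // Q w} where
  toFun p := (p.1.1, ⟨p.1.2, p.2⟩)
  invFun q := ⟨(q.1, q.2.1), q.2.2⟩
  left_inv p := rfl
  right_inv q := rfl

theorem bcount_split (w : ℕ → Prop) (G G₂ : Finset ℕ) (ha : 1 ≤ a)
    (hG : a - 1 ∈ G) (hG₂ : ∀ j, j ∈ G₂ ↔ j + a ∈ G) :
    bcount (a + b) w G = (a + b).choose a * bcount a w G * bcount b (fun j => w (j + a)) G₂ := by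
  have key : ∀ σ : Equiv.Perm (Fin (a + b)),
      bP (a + b) w G σ ↔ bP a w G (firstPerm σ) ∧ bP b (fun j => w (j + a)) G₂ (secondPerm σ) := by
    intro σ
    constructor
    · intro hP
      constructor
      · intro j hj hg
        rw [firstPerm_apply, firstPerm_apply, firstFun_lt_iff]
        exact hP j (by omega) hg
      · intro j hj hg
        rw [secondPerm_apply, secondPerm_apply, secondFun_lt_iff]
        have h1 := hP (a + j) (by omega) (by
          intro hmem
          exact hg ((hG₂ j).mpr (by rwa [Nat.add_comm j a])))
        exact h1.trans (iff_of_eq (congrArg w (Nat.add_comm a j)))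
    · rintro ⟨h1, h2⟩ j hj hg
      rcases lt_trichotomy (j + 1) a with hlt | heq | hgt
      · have h3 := h1 j hlt hg
        rw [firstPerm_apply, firstPerm_apply, firstFun_lt_iff] at h3
        exact h3
      · exact absurd (show j ∈ G by rw [show j = a - 1 by omega]; exact hG) hg
      · obtain ⟨j', rfl⟩ : ∃ j', j = a + j' := ⟨j - a, by omega⟩
        have hg₂ : j' ∉ G₂ := fun hmem => hg (by
          have := (hG₂ j').mp hmem
          rwa [Nat.add_comm j' a] at this)
        have h3 := h2 j' (by omega) hg₂
        rw [secondPerm_apply, secondPerm_apply, secondFun_lt_iff] at h3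
        exact h3.trans (iff_of_eq (congrArg w (Nat.add_comm j' a)))
  have e2 : {σ : Equiv.Perm (Fin (a + b)) // bP (a + b) w G σ} ≃
      {A : Finset (Fin (a + b)) // A.card = a} ×
        ({x : Equiv.Perm (Fin a) // bP a w G x} ×
          {x : Equiv.Perm (Fin b) // bP b (fun j => w (j + a)) G₂ x}) :=
    ((Equiv.ofBijective (Phi a b) (Phi_bijective a b)).subtypeEquiv
      (q := fun x => bP a w G x.2.1 ∧ bP b (fun j => w (j + a)) G₂ x.2.2)
      (fun σ => key σ)).trans
      ((prodSub _).trans ((Equiv.refl _).prodCongr Equiv.subtypeProdEquivProd))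
  rw [bcount, Nat.card_congr e2, Nat.card_prod, Nat.card_prod,
    Nat.card_eq_fintype_card (α := {A : Finset (Fin (a + b)) // A.card = a}),
    Fintype.card_finset_len, Fintype.card_fin]
  rw [bcount, bcount]
  ring

end Split

noncomputable def betaC (m : ℕ) (S : Finset ℕ) : ℕ :=
  Nat.card {σ : Equiv.Perm (Fin m) // ∀ i, IsAltDescent σ i → i ∈ S}

lemma betaC_eq_bcount (m : ℕ) (S : Finset ℕ) (hS : ∀ i ∈ S, 1 ≤ i) :
    betaC m S = bcount m wA (S.image (· - 1)) := by
  have hmem : ∀ j : ℕ, j ∈ S.image (· - 1) ↔ j + 1 ∈ S := by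
    intro j
    rw [Finset.mem_image]
    constructor
    · rintro ⟨i, hi, rfl⟩
      have := hS i hi
      rwa [show i - 1 + 1 = i by omega]
    · intro h
      exact ⟨j + 1, h, by omega⟩
  apply Nat.card_congr
  apply Equiv.subtypeEquivRight
  intro σ
  constructor
  · intro hs j hj hgim
    have hnS : j + 1 ∉ S := fun h => hgim ((hmem j).mpr h)
    have hcd : ¬ (((j + 1) % 2 = 1 ∧ permEnt σ (j + 2) < permEnt σ (j + 1)) ∨
        ((j + 1) % 2 = 0 ∧ permEnt σ (j + 1) < permEnt σ (j + 2))) := by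
      intro h'
      exact hnS (hs (j + 1) ⟨by omega, by omega, h'⟩)
    rcases Nat.mod_two_eq_zero_or_one j with hpar | hpar
    · have h5 : ¬ permEnt σ (j + 2) < permEnt σ (j + 1) :=
        fun hlt => hcd (Or.inl ⟨by omega, hlt⟩)
      have h7 : σ ⟨j, by omega⟩ < σ ⟨j + 1, hj⟩ :=
        not_not.mp (fun hn => h5 ((entDown σ j hj).mpr hn))
      exact ⟨fun _ => by unfold wA; omega, fun _ => h7⟩
    · have h5 : ¬ permEnt σ (j + 1) < permEnt σ (j + 2) :=
        fun hlt => hcd (Or.inr ⟨by omega, hlt⟩)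
      constructor
      · intro hlt
        exact absurd ((entUp σ j hj).mpr hlt) h5
      · intro hw
        exact absurd hw (by unfold wA; omega)
  · intro hbp i hdesc
    by_contra hiS
    obtain ⟨h1, h2, h3⟩ := hdesc
    obtain ⟨j, rfl⟩ : ∃ j, i = j + 1 := ⟨i - 1, by omega⟩
    have hjim : j ∉ S.image (· - 1) := fun h => hiS ((hmem j).mp h)
    have h4 := hbp j h2 hjim
    rcases h3 with ⟨hpar, hlt⟩ | ⟨hpar, hlt⟩
    · rw [show j + 1 + 1 = j + 2 from rfl] at hlt
      rw [entDown σ j h2] at hlt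
      exact hlt (h4.mpr (by unfold wA; omega))
    · rw [show j + 1 + 1 = j + 2 from rfl] at hlt
      rw [entUp σ j h2] at hlt
      have := h4.mp hlt
      unfold wA at this
      omega

lemma betaC_empty (m : ℕ) : betaC m ∅ = eulerNum m := by
  rw [betaC_eq_bcount m ∅ (by simp), Finset.image_empty, ← eulerNum_eq_bcountA]

lemma betaC_insert (m k : ℕ) (S : Finset ℕ) (hk1 : 1 ≤ k) (hkm : k < m)
    (hS : ∀ i ∈ S, k + 1 ≤ i) :
    betaC m (insert k S) = m.choose k * eulerNum k * betaC (m - k) (S.image (· - k)) := by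
  obtain ⟨b, rfl⟩ : ∃ b, m = k + b := ⟨m - k, by omega⟩
  rw [Nat.add_sub_cancel_left]
  have hins : ∀ i ∈ insert k S, 1 ≤ i := by
    intro i hi
    rcases Finset.mem_insert.mp hi with rfl | hi'
    · omega
    · have := hS i hi'; omega
  rw [betaC_eq_bcount _ _ hins]
  set G : Finset ℕ := (insert k S).image (· - 1) with hGdef
  set G₂ : Finset ℕ := S.image (fun i => i - 1 - k) with hG₂def
  have hG : k - 1 ∈ G := Finset.mem_image.mpr ⟨k, Finset.mem_insert_self k S, rfl⟩
  have hG₂ : ∀ j, j ∈ G₂ ↔ j + k ∈ G := by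
    intro j
    rw [hG₂def, hGdef, Finset.mem_image, Finset.mem_image]
    constructor
    · rintro ⟨i, hi, rfl⟩
      have := hS i hi
      exact ⟨i, Finset.mem_insert_of_mem hi, by omega⟩
    · rintro ⟨i, hi, hieq⟩
      rcases Finset.mem_insert.mp hi with rfl | hi'
      · omega
      · have := hS i hi'
        exact ⟨i, hi', by omega⟩
  rw [bcount_split k b wA G G₂ hk1 hG hG₂]
  congr 1
  · congr 1
    rw [eulerNum_eq_bcountA]
    apply bcount_congr
    · intro j hj
      simp only [Finset.notMem_empty, iff_false]
      intro hmem
      obtain ⟨i, hi, hieq⟩ := Finset.mem_image.mp hmem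
      rcases Finset.mem_insert.mp hi with rfl | hi'
      · omega
      · have := hS i hi'; omega
    · intro j _ _; exact Iff.rfl
  · have himg : (S.image (· - k)).image (· - 1) = G₂ := by
      rw [Finset.image_image, hG₂def]
      apply Finset.image_congr
      intro i _
      simp only [Function.comp_apply]
      omega
    rw [betaC_eq_bcount b _ (by
      intro i hi
      obtain ⟨i', hi', rfl⟩ := Finset.mem_image.mp hi
      have := hS i' hi'
      omega), himg]
    rcases Nat.mod_two_eq_zero_or_one k with hke | hko
    · apply bcount_congr (fun j _ => Iff.rfl)
      intro j _ _
      unfold wA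
      omega
    · rw [bcount_flip]
      apply bcount_congr (fun j _ => Iff.rfl)
      intro j _ _
      unfold wA
      omega

def Dset {m : ℕ} (σ : Equiv.Perm (Fin m)) : Finset ℕ :=
  (Finset.range m).filter (fun i => IsAltDescent σ i)

lemma altdes_eq_card {m : ℕ} (σ : Equiv.Perm (Fin m)) : altdes σ = (Dset σ).card := rfl

lemma mem_Dset {m : ℕ} (σ : Equiv.Perm (Fin m)) (i : ℕ) :
    i ∈ Dset σ ↔ IsAltDescent σ i := by
  rw [Dset, Finset.mem_filter, Finset.mem_range]
  exact ⟨fun h => h.2, fun h => ⟨h.2.1, h⟩⟩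

lemma Dset_subset {m : ℕ} (σ : Equiv.Perm (Fin m)) : Dset σ ⊆ Finset.Icc 1 (m - 1) := by
  intro i hi
  rw [mem_Dset] at hi
  obtain ⟨h1, h2, _⟩ := hi
  rw [Finset.mem_Icc]
  omega

lemma betaC_card (m : ℕ) (S : Finset ℕ) :
    betaC m S =
      ((Finset.univ : Finset (Equiv.Perm (Fin m))).filter (fun σ => Dset σ ⊆ S)).card := by
  rw [betaC, Nat.card_congr (Equiv.subtypeEquivRight (q := fun σ => Dset σ ⊆ S)
    (fun σ => ⟨fun h i hi => h i ((mem_Dset σ i).mp hi),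
      fun h i hi => h ((mem_Dset σ i).mpr hi)⟩)),
    Nat.card_eq_fintype_card, Fintype.card_subtype]

lemma binom_powerset (U : Finset ℕ) :
    ∑ T ∈ U.powerset, (Polynomial.X : Polynomial ℚ) ^ T.card *
      (1 - Polynomial.X) ^ (U.card - T.card) = 1 := by
  have h := Finset.prod_add (fun _ : ℕ => (Polynomial.X : Polynomial ℚ))
    (fun _ : ℕ => 1 - Polynomial.X) U
  simp only [Finset.prod_const] at h
  have hl : (Polynomial.X + (1 - Polynomial.X) : Polynomial ℚ) ^ U.card = 1 := by
    rw [show (Polynomial.X + (1 - Polynomial.X) : Polynomial ℚ) = 1 by ring, one_pow]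
  rw [hl] at h
  refine Eq.trans (Finset.sum_congr rfl (fun T hT => ?_)) h.symm
  rw [Finset.card_sdiff_of_subset (Finset.mem_powerset.mp hT)]

lemma sum_over_supersets {I D : Finset ℕ} (hD : D ⊆ I) :
    ∑ S ∈ I.powerset.filter (fun S => D ⊆ S),
      (Polynomial.X : Polynomial ℚ) ^ (S.card + 1) * (1 - Polynomial.X) ^ (I.card - S.card) =
    Polynomial.X ^ (D.card + 1) := by
  have hre : ∑ S ∈ I.powerset.filter (fun S => D ⊆ S),
      (Polynomial.X : Polynomial ℚ) ^ (S.card + 1) * (1 - Polynomial.X) ^ (I.card - S.card) =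
      ∑ T ∈ (I \ D).powerset, Polynomial.X ^ (D.card + 1) *
        (Polynomial.X ^ T.card * (1 - Polynomial.X) ^ ((I \ D).card - T.card)) := by
    apply Finset.sum_nbij' (i := fun S => S \ D) (j := fun T => D ∪ T)
    · intro S hS
      rw [Finset.mem_filter, Finset.mem_powerset] at hS
      rw [Finset.mem_powerset]
      exact Finset.sdiff_subset_sdiff hS.1 (Finset.Subset.refl D)
    · intro T hT
      rw [Finset.mem_powerset] at hT
      rw [Finset.mem_filter, Finset.mem_powerset]
      constructor
      · exact Finset.union_subset hD (hT.trans Finset.sdiff_subset)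
      · exact Finset.subset_union_left
    · intro S hS
      rw [Finset.mem_filter] at hS
      exact Finset.union_sdiff_of_subset hS.2
    · intro T hT
      rw [Finset.mem_powerset] at hT
      exact Finset.union_sdiff_cancel_left
        (Finset.disjoint_of_subset_right hT Finset.sdiff_disjoint.symm)
    · intro S hS
      rw [Finset.mem_filter, Finset.mem_powerset] at hS
      obtain ⟨hSI, hDS⟩ := hS
      have hc1 : (S \ D).card = S.card - D.card := Finset.card_sdiff_of_subset hDS
      have hc2 : D.card ≤ S.card := Finset.card_le_card hDS
      have hc3 : S.card ≤ I.card := Finset.card_le_card hSI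
      have hc4 : (I \ D).card = I.card - D.card := Finset.card_sdiff_of_subset hD
      have e1 : D.card + 1 + (S \ D).card = S.card + 1 := by omega
      have e2 : (I \ D).card - (S \ D).card = I.card - S.card := by omega
      rw [e2, ← mul_assoc, ← pow_add, e1]
  rw [hre, ← Finset.mul_sum, binom_powerset, mul_one]

noncomputable def Ap (m : ℕ) : Polynomial ℚ :=
  ∑ σ : Equiv.Perm (Fin m), Polynomial.X ^ (altdes σ + 1)

lemma L0 (m : ℕ) :
    Ap m = ∑ S ∈ (Finset.Icc 1 (m - 1)).powerset,
      (betaC m S : Polynomial ℚ) *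
        (Polynomial.X ^ (S.card + 1) * (1 - Polynomial.X) ^ (m - 1 - S.card)) := by
  have hIcard : (Finset.Icc 1 (m - 1)).card = m - 1 := by
    rw [Nat.card_Icc]
    omega
  have hbeta : ∀ S : Finset ℕ, (betaC m S : Polynomial ℚ) =
      ∑ σ : Equiv.Perm (Fin m), (if Dset σ ⊆ S then (1 : Polynomial ℚ) else 0) := by
    intro S
    rw [betaC_card m S, Finset.card_filter]
    push_cast
    rfl
  have step : ∀ σ : Equiv.Perm (Fin m),
      ∑ S ∈ (Finset.Icc 1 (m - 1)).powerset, (if Dset σ ⊆ S then (1 : Polynomial ℚ) else 0) *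
        (Polynomial.X ^ (S.card + 1) * (1 - Polynomial.X) ^ (m - 1 - S.card)) =
      Polynomial.X ^ (altdes σ + 1) := by
    intro σ
    have : ∀ S : Finset ℕ, (m - 1 - S.card) = ((Finset.Icc 1 (m - 1)).card - S.card) := by
      intro S; rw [hIcard]
    simp only [this, ite_mul, one_mul, zero_mul]
    rw [← Finset.sum_filter, sum_over_supersets (Dset_subset σ), altdes_eq_card]
  rw [show Ap m = ∑ σ : Equiv.Perm (Fin m), Polynomial.X ^ (altdes σ + 1) from rfl]
  simp only [hbeta, Finset.sum_mul]
  rw [Finset.sum_comm]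
  exact Finset.sum_congr rfl (fun σ _ => (step σ).symm)

lemma inner_sum (m k : ℕ) (hk1 : 1 ≤ k) (hkm : k ≤ m - 1) (hm : 2 ≤ m) :
    (∑ S' ∈ (Finset.Icc (k + 1) (m - 1)).powerset,
      (betaC m (insert k S') : Polynomial ℚ) *
        (Polynomial.X ^ ((insert k S').card + 1) *
          (1 - Polynomial.X) ^ (m - 1 - (insert k S').card))) =
    ((m.choose k : Polynomial ℚ) * (eulerNum k : Polynomial ℚ) *
      (Polynomial.X * (1 - Polynomial.X) ^ (k - 1))) * Ap (m - k) := by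
  have hkm' : k < m := by omega
  have step1 : ∀ S' ∈ (Finset.Icc (k + 1) (m - 1)).powerset,
      (betaC m (insert k S') : Polynomial ℚ) *
        (Polynomial.X ^ ((insert k S').card + 1) *
          (1 - Polynomial.X) ^ (m - 1 - (insert k S').card)) =
      ((m.choose k : Polynomial ℚ) * (eulerNum k : Polynomial ℚ)) *
        ((betaC (m - k) (S'.image (· - k)) : Polynomial ℚ) *
          (Polynomial.X ^ (S'.card + 1 + 1) *
            (1 - Polynomial.X) ^ (m - 1 - (S'.card + 1)))) := by
    intro S' hS'
    have hsub := Finset.mem_powerset.mp hS'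
    have hSge : ∀ i ∈ S', k + 1 ≤ i := fun i hi => (Finset.mem_Icc.mp (hsub hi)).1
    have hknot : k ∉ S' := fun h => by have := hSge k h; omega
    rw [Finset.card_insert_of_notMem hknot, betaC_insert m k S' hk1 hkm' hSge]
    push_cast
    ring
  rw [Finset.sum_congr rfl step1]
  have step2 : ∑ S' ∈ (Finset.Icc (k + 1) (m - 1)).powerset,
      ((m.choose k : Polynomial ℚ) * (eulerNum k : Polynomial ℚ)) *
        ((betaC (m - k) (S'.image (· - k)) : Polynomial ℚ) *
          (Polynomial.X ^ (S'.card + 1 + 1) *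
            (1 - Polynomial.X) ^ (m - 1 - (S'.card + 1)))) =
      ∑ T ∈ (Finset.Icc 1 (m - k - 1)).powerset,
      ((m.choose k : Polynomial ℚ) * (eulerNum k : Polynomial ℚ)) *
        ((betaC (m - k) T : Polynomial ℚ) *
          (Polynomial.X ^ (T.card + 1 + 1) *
            (1 - Polynomial.X) ^ (m - 1 - (T.card + 1)))) := by
    apply Finset.sum_nbij' (i := fun S' => S'.image (· - k)) (j := fun T => T.image (· + k))
    · intro S' hS'
      have hsub := Finset.mem_powerset.mp hS'
      rw [Finset.mem_powerset]
      intro x hx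
      obtain ⟨i, hi, rfl⟩ := Finset.mem_image.mp hx
      have := Finset.mem_Icc.mp (hsub hi)
      rw [Finset.mem_Icc]
      omega
    · intro T hT
      have hsub := Finset.mem_powerset.mp hT
      rw [Finset.mem_powerset]
      intro x hx
      obtain ⟨i, hi, rfl⟩ := Finset.mem_image.mp hx
      have := Finset.mem_Icc.mp (hsub hi)
      rw [Finset.mem_Icc]
      omega
    · intro S' hS'
      have hsub := Finset.mem_powerset.mp hS'
      rw [Finset.image_image]
      rw [show S'.image ((· + k) ∘ (· - k)) = S'.image id from Finset.image_congr (by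
        intro i hi
        have := Finset.mem_Icc.mp (hsub hi)
        simp only [Function.comp_apply, id_eq]
        omega)]
      rw [Finset.image_id]
    · intro T hT
      have hsub := Finset.mem_powerset.mp hT
      rw [Finset.image_image]
      rw [show T.image ((· - k) ∘ (· + k)) = T.image id from Finset.image_congr (by
        intro i hi
        simp only [Function.comp_apply, id_eq]
        omega)]
      rw [Finset.image_id]
    · intro S' hS'
      have hsub := Finset.mem_powerset.mp hS'
      have hcard : (S'.image (· - k)).card = S'.card := by
        apply Finset.card_image_of_injOn
        intro x hx y hy hxy
        have hxy' : x - k = y - k := hxy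
        have h1 := Finset.mem_Icc.mp (hsub hx)
        have h2 := Finset.mem_Icc.mp (hsub hy)
        omega
      rw [hcard]
  rw [step2]
  have step3 : ∀ T ∈ (Finset.Icc 1 (m - k - 1)).powerset,
      ((m.choose k : Polynomial ℚ) * (eulerNum k : Polynomial ℚ)) *
        ((betaC (m - k) T : Polynomial ℚ) *
          (Polynomial.X ^ (T.card + 1 + 1) *
            (1 - Polynomial.X) ^ (m - 1 - (T.card + 1)))) =
      ((m.choose k : Polynomial ℚ) * (eulerNum k : Polynomial ℚ) *
        (Polynomial.X * (1 - Polynomial.X) ^ (k - 1))) *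
        ((betaC (m - k) T : Polynomial ℚ) *
          (Polynomial.X ^ (T.card + 1) * (1 - Polynomial.X) ^ (m - k - 1 - T.card))) := by
    intro T hT
    have hTcard : T.card ≤ m - k - 1 := by
      have := Finset.card_le_card (Finset.mem_powerset.mp hT)
      rwa [Nat.card_Icc, Nat.add_sub_cancel] at this
    rw [show m - 1 - (T.card + 1) = (k - 1) + (m - k - 1 - T.card) from by omega, pow_add,
      pow_succ]
    ring
  rw [Finset.sum_congr rfl step3, ← Finset.mul_sum]
  congr 1
  exact (L0 (m - k)).symm

lemma starstar (m : ℕ) (hm : 1 ≤ m) :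
    Ap m = (∑ k ∈ Finset.Icc 1 (m - 1),
        (m.choose k : Polynomial ℚ) * (eulerNum k : Polynomial ℚ) *
          (Polynomial.X * (1 - Polynomial.X) ^ (k - 1)) * Ap (m - k)) +
      (eulerNum m : Polynomial ℚ) * (Polynomial.X * (1 - Polynomial.X) ^ (m - 1)) := by
  rw [L0 m]
  have hemp : (∅ : Finset ℕ) ∈ (Finset.Icc 1 (m - 1)).powerset := Finset.empty_mem_powerset _
  have hsplit := Finset.sum_erase_add ((Finset.Icc 1 (m - 1)).powerset)
    (fun S => (betaC m S : Polynomial ℚ) *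
      (Polynomial.X ^ (S.card + 1) * (1 - Polynomial.X) ^ (m - 1 - S.card))) hemp
  rw [← hsplit]
  congr 1
  · -- main sum over nonempty subsets
    have hsig : ∑ S ∈ ((Finset.Icc 1 (m - 1)).powerset).erase ∅,
        (betaC m S : Polynomial ℚ) *
          (Polynomial.X ^ (S.card + 1) * (1 - Polynomial.X) ^ (m - 1 - S.card)) =
        ∑ p ∈ (Finset.Icc 1 (m - 1)).sigma (fun k => (Finset.Icc (k + 1) (m - 1)).powerset),
        (betaC m (insert p.1 p.2) : Polynomial ℚ) *
          (Polynomial.X ^ ((insert p.1 p.2).card + 1) *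
            (1 - Polynomial.X) ^ (m - 1 - (insert p.1 p.2).card)) := by
      apply Finset.sum_nbij'
        (i := fun S => if h : S.Nonempty then (⟨S.min' h, S.erase (S.min' h)⟩ : Σ _ : ℕ, Finset ℕ)
          else ⟨0, ∅⟩)
        (j := fun p => insert p.1 p.2)
      · intro S hS
        rw [Finset.mem_erase] at hS
        obtain ⟨hne, hsub⟩ := hS
        have hne' : S.Nonempty := Finset.nonempty_of_ne_empty hne
        rw [dif_pos hne', Finset.mem_sigma]
        dsimp only
        constructor
        · exact Finset.mem_powerset.mp hsub (S.min'_mem hne')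
        · rw [Finset.mem_powerset]
          intro x hx
          rw [Finset.mem_erase] at hx
          have hxS := Finset.mem_powerset.mp hsub hx.2
          rw [Finset.mem_Icc] at hxS ⊢
          have hmin : S.min' hne' ≤ x := S.min'_le x hx.2
          have := hx.1
          omega
      · intro p hp
        rw [Finset.mem_sigma] at hp
        obtain ⟨hk, hsub⟩ := hp
        rw [Finset.mem_erase]
        constructor
        · exact Finset.insert_ne_empty _ _
        · rw [Finset.mem_powerset]
          intro x hx
          rcases Finset.mem_insert.mp hx with rfl | hx'
          · exact hk
          · have := Finset.mem_Icc.mp (Finset.mem_powerset.mp hsub hx')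
            rw [Finset.mem_Icc] at hk ⊢
            omega
      · intro S hS
        rw [Finset.mem_erase] at hS
        have hne' : S.Nonempty := Finset.nonempty_of_ne_empty hS.1
        rw [dif_pos hne']
        exact Finset.insert_erase (S.min'_mem hne')
      · intro p hp
        rw [Finset.mem_sigma] at hp
        obtain ⟨hk, hsub⟩ := hp
        have hnot : p.1 ∉ p.2 := by
          intro h
          have := Finset.mem_Icc.mp (Finset.mem_powerset.mp hsub h)
          omega
        have hne' : (insert p.1 p.2).Nonempty := Finset.insert_nonempty _ _
        rw [dif_pos hne']
        have hmin : (insert p.1 p.2).min' hne' = p.1 := by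
          apply le_antisymm
          · exact Finset.min'_le _ _ (Finset.mem_insert_self _ _)
          · apply Finset.le_min'
            intro y hy
            rcases Finset.mem_insert.mp hy with rfl | hy'
            · exact le_refl _
            · have := Finset.mem_Icc.mp (Finset.mem_powerset.mp hsub hy')
              omega
        rw [hmin, Finset.erase_insert hnot]
      · intro S hS
        rw [Finset.mem_erase] at hS
        have hne' : S.Nonempty := Finset.nonempty_of_ne_empty hS.1
        rw [dif_pos hne']
        rw [Finset.insert_erase (S.min'_mem hne')]
    rw [hsig, Finset.sum_sigma]
    apply Finset.sum_congr rfl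
    intro k hk
    rw [Finset.mem_Icc] at hk
    have hm2 : 2 ≤ m := by omega
    exact inner_sum m k hk.1 hk.2 hm2
  · rw [betaC_empty]
    simp

lemma eulerNum_zero : eulerNum 0 = 1 := by
  have hall : ∀ σ : Equiv.Perm (Fin 0), IsAltPerm σ := by
    intro σ i _ h2
    exact absurd h2 (by omega)
  rw [eulerNum, Nat.card_congr (Equiv.subtypeUnivEquiv hall),
    Nat.card_eq_fintype_card, Fintype.card_perm, Fintype.card_fin]
  rfl

lemma star (m : ℕ) (hm : 1 ≤ m) :
    Ap m = ∑ k ∈ Finset.range (m + 1),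
      Polynomial.X * ((m.choose k : Polynomial ℚ) * (eulerNum k : Polynomial ℚ) *
        ((1 - Polynomial.X) ^ k * (if m - k = 0 then 1 else Ap (m - k)))) := by
  have h0notin : (0 : ℕ) ∉ Finset.Icc 1 m := by simp
  have hmnotin : m ∉ Finset.Icc 1 (m - 1) := by
    rw [Finset.mem_Icc]; omega
  have h1 : Finset.range (m + 1) = insert 0 (Finset.Icc 1 m) := by
    ext x; rw [Finset.mem_range, Finset.mem_insert, Finset.mem_Icc]; omega
  have h2 : Finset.Icc 1 m = insert m (Finset.Icc 1 (m - 1)) := by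
    ext x; rw [Finset.mem_Icc, Finset.mem_insert, Finset.mem_Icc]; omega
  rw [h1, Finset.sum_insert h0notin, h2, Finset.sum_insert hmnotin]
  rw [Nat.sub_zero, if_neg (by omega : ¬ m = 0), Nat.sub_self, if_pos rfl,
    Nat.choose_zero_right, Nat.choose_self, eulerNum_zero]
  have hmid : ∑ k ∈ Finset.Icc 1 (m - 1),
      Polynomial.X * ((m.choose k : Polynomial ℚ) * (eulerNum k : Polynomial ℚ) *
        ((1 - Polynomial.X) ^ k * (if m - k = 0 then 1 else Ap (m - k)))) =
      (1 - Polynomial.X) * ∑ k ∈ Finset.Icc 1 (m - 1),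
        (m.choose k : Polynomial ℚ) * (eulerNum k : Polynomial ℚ) *
          (Polynomial.X * (1 - Polynomial.X) ^ (k - 1)) * Ap (m - k) := by
    rw [Finset.mul_sum]
    apply Finset.sum_congr rfl
    intro k hk
    rw [Finset.mem_Icc] at hk
    rw [if_neg (by omega : ¬ m - k = 0)]
    have hpow : (1 - Polynomial.X : Polynomial ℚ) ^ k =
        (1 - Polynomial.X) ^ (k - 1) * (1 - Polynomial.X) := by
      rw [← pow_succ]
      congr 1
      omega
    rw [hpow]
    ring
  rw [hmid]
  have hfm : Polynomial.X * (((1 : ℕ) : Polynomial ℚ) * (eulerNum m : Polynomial ℚ) *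
      ((1 - Polynomial.X) ^ m * 1)) =
      (1 - Polynomial.X) * ((eulerNum m : Polynomial ℚ) *
        (Polynomial.X * (1 - Polynomial.X) ^ (m - 1))) := by
    have hpow : (1 - Polynomial.X : Polynomial ℚ) ^ m =
        (1 - Polynomial.X) ^ (m - 1) * (1 - Polynomial.X) := by
      rw [← pow_succ]
      congr 1
      omega
    rw [hpow]
    push_cast
    ring
  rw [hfm, starstar m hm]
  push_cast
  ring

end St16

open St16

/-- in `(ℚ[t])⟦X⟧`, with `Ê = Σₙ Eₙ·Xⁿ/n!` and
`Âₙ(t) = Σ_{π ∈ Sₙ} t^{altdes(π)+1}`, we have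
`(1 − t·(rescale by (1−t) of Ê)) · (1 + Σ_{n≥1} Âₙ(t)·Xⁿ/n!) = 1 − t`. -/
theorem statement16 :
    (1 - PowerSeries.C (R := Polynomial ℚ) Polynomial.X *
        PowerSeries.rescale (1 - Polynomial.X)
          (PowerSeries.mk (fun n : ℕ => Polynomial.C ((eulerNum n : ℚ) / n.factorial)))) *
      (PowerSeries.mk (fun n : ℕ =>
        if n = 0 then 1 else
          (∑ σ : Equiv.Perm (Fin n), (Polynomial.X : Polynomial ℚ) ^ (altdes σ + 1)) *
            Polynomial.C ((1 : ℚ) / n.factorial))) =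
      PowerSeries.C (R := Polynomial ℚ) (1 - Polynomial.X) := by
  apply PowerSeries.ext
  intro n
  have hcoeff1 : ∀ k : ℕ, (PowerSeries.coeff k)
      (1 - PowerSeries.C (R := Polynomial ℚ) Polynomial.X *
        PowerSeries.rescale (1 - Polynomial.X)
          (PowerSeries.mk (fun n : ℕ => Polynomial.C ((eulerNum n : ℚ) / n.factorial)))) =
      (if k = 0 then 1 else 0) -
        Polynomial.X * ((1 - Polynomial.X) ^ k *
          Polynomial.C ((eulerNum k : ℚ) / k.factorial)) := by
    intro k
    rw [map_sub, PowerSeries.coeff_one]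
    congr 1
    rw [PowerSeries.coeff_C_mul, PowerSeries.coeff_rescale, PowerSeries.coeff_mk]
  have hApdef : ∀ l : ℕ,
      (∑ σ : Equiv.Perm (Fin l), (Polynomial.X : Polynomial ℚ) ^ (altdes σ + 1)) = Ap l :=
    fun l => rfl
  rw [PowerSeries.coeff_mul, Finset.Nat.sum_antidiagonal_eq_sum_range_succ_mk,
    PowerSeries.coeff_C]
  simp only [hcoeff1, PowerSeries.coeff_mk, hApdef]
  rcases Nat.eq_zero_or_pos n with rfl | hn
  · rw [if_pos rfl]
    rw [show (0:ℕ).succ = 1 from rfl, Finset.range_one, Finset.sum_singleton]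
    rw [if_pos rfl]
    norm_num [eulerNum_zero]
  · rw [if_neg (by omega)]
    have hsplit : ∀ k ∈ Finset.range n.succ,
        ((if k = 0 then (1 : Polynomial ℚ) else 0) -
          Polynomial.X * ((1 - Polynomial.X) ^ k *
            Polynomial.C ((eulerNum k : ℚ) / k.factorial))) *
          (if n - k = 0 then 1 else Ap (n - k) * Polynomial.C ((1:ℚ) / (n-k).factorial)) =
        (if k = 0 then (1 : Polynomial ℚ) else 0) *
          (if n - k = 0 then 1 else Ap (n - k) * Polynomial.C ((1:ℚ) / (n-k).factorial)) -
        (Polynomial.X * ((1 - Polynomial.X) ^ k *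
            Polynomial.C ((eulerNum k : ℚ) / k.factorial))) *
          (if n - k = 0 then 1 else Ap (n - k) * Polynomial.C ((1:ℚ) / (n-k).factorial)) := by
      intro k _
      ring
    rw [Finset.sum_congr rfl hsplit, Finset.sum_sub_distrib]
    have hfirst : ∑ k ∈ Finset.range n.succ,
        (if k = 0 then (1 : Polynomial ℚ) else 0) *
          (if n - k = 0 then 1 else Ap (n - k) * Polynomial.C ((1:ℚ) / (n-k).factorial)) =
        Ap n * Polynomial.C ((1:ℚ) / n.factorial) := by
      rw [Finset.sum_eq_single_of_mem 0 (Finset.mem_range.mpr (by omega))]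
      · rw [if_pos rfl, one_mul, Nat.sub_zero, if_neg (by omega)]
      · intro k _ hk0
        rw [if_neg hk0, zero_mul]
    rw [hfirst]
    rw [sub_eq_zero]
    rw [star n hn, Finset.sum_mul]
    apply Finset.sum_congr rfl
    intro k hk
    have hkn : k ≤ n := by
      have := Finset.mem_range.mp hk
      omega
    by_cases hnk : n - k = 0
    · rw [if_pos hnk, if_pos hnk]
      have hkeq : k = n := by omega
      subst hkeq
      rw [Nat.choose_self]
      have hC : (eulerNum k : Polynomial ℚ) * Polynomial.C ((1:ℚ) / k.factorial) =
          Polynomial.C ((eulerNum k : ℚ) / k.factorial) := by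
        rw [← Polynomial.C_eq_natCast, ← Polynomial.C_mul]
        congr 1
        rw [mul_one_div]
      push_cast
      linear_combination (Polynomial.X * (1 - Polynomial.X) ^ k) * hC
    · rw [if_neg hnk, if_neg hnk]
      have hC : (n.choose k : Polynomial ℚ) * (eulerNum k : Polynomial ℚ) *
          Polynomial.C ((1:ℚ) / n.factorial) =
          Polynomial.C ((eulerNum k : ℚ) / k.factorial) *
            Polynomial.C ((1:ℚ) / (n - k).factorial) := by
        rw [← Polynomial.C_eq_natCast, ← Polynomial.C_eq_natCast, ← Polynomial.C_mul,
          ← Polynomial.C_mul, ← Polynomial.C_mul]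
        congr 1
        rw [Nat.cast_choose ℚ hkn]
        have h1 : (k.factorial : ℚ) ≠ 0 := Nat.cast_ne_zero.mpr k.factorial_ne_zero
        have h2 : ((n - k).factorial : ℚ) ≠ 0 := Nat.cast_ne_zero.mpr (n - k).factorial_ne_zero
        have h3 : (n.factorial : ℚ) ≠ 0 := Nat.cast_ne_zero.mpr n.factorial_ne_zero
        field_simp
      linear_combination (Polynomial.X * (1 - Polynomial.X) ^ k * Ap (n - k)) * hC
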